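/- arXiv:2210.02394 — 5 statements merged into one kernel-verified Lean document; each statement's English description precedes it below -/
import Mathlib

section
/- Let G be a signed graph on n vertices, let C be a closest balanced state to G, and call an edge red if G and C assign it different signs. Suppose the set of vertices incident to at least one red edge has size at most n/2. Then in every imbalanced triad of G that contains exactly one red edge, the red edge has strictly greater rank than each of the other two edges; consequently, in every imbalanced triad of G, every edge of maximal rank within that triad is red. -/
open Finset

/-- A signed graph on `n` vertices: `true` = friendship (+1), `false` = enmity (−1). -/
abbrev SignedGraph (n : ℕ) := Fin n → Fin n → Bool

/-- The sign assignment is symmetric (it is an assignment to undirected edges). -/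
def Symm {n : ℕ} (G : SignedGraph n) : Prop := ∀ u v, G u v = G v u

/-- The triad `{u,v,w}` is balanced: it contains an even number (0 or 2) of enmity edges. -/
def BalancedTriad {n : ℕ} (G : SignedGraph n) (u v w : Fin n) : Prop :=
  Bool.xor (G u v) (Bool.xor (G v w) (G u w)) = true

instance {n : ℕ} (G : SignedGraph n) (u v w : Fin n) :
    Decidable (BalancedTriad G u v w) :=
  inferInstanceAs (Decidable (_ = true))

/-- The rank of the edge `(u,v)`: the number of imbalanced triads containing it. -/
def rank {n : ℕ} (G : SignedGraph n) (u v : Fin n) : ℕ :=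
  (univ.filter (fun w => w ≠ u ∧ w ≠ v ∧ ¬ BalancedTriad G u v w)).card

/-- A signed graph is balanced if every triad is balanced. -/
def IsBalanced {n : ℕ} (G : SignedGraph n) : Prop :=
  ∀ u v w : Fin n, u ≠ v → v ≠ w → u ≠ w → BalancedTriad G u v w

/-- A signed graph is jammed if it is not balanced and every edge `e`
satisfies `2 * r_e < n - 2`. -/
def IsJammed {n : ℕ} (G : SignedGraph n) : Prop :=
  ¬ IsBalanced G ∧ ∀ u v : Fin n, u ≠ v → 2 * rank G u v < n - 2

/-- Flipping (reversing the sign of) the undirected edge `p`. -/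
def flipEdge {n : ℕ} (G : SignedGraph n) (p : Sym2 (Fin n)) : SignedGraph n :=
  fun x y => if s(x, y) = p then !(G x y) else G x y

/-- A CTD-admissible flipEdge: the edge lies in some imbalanced triad and `2 r_e ≥ n - 2`. -/
def CTDAdmissible {n : ℕ} (G : SignedGraph n) (p : Sym2 (Fin n)) : Prop :=
  ∃ u v : Fin n, p = s(u, v) ∧ u ≠ v ∧
    (∃ w, w ≠ u ∧ w ≠ v ∧ ¬ BalancedTriad G u v w) ∧
    n - 2 ≤ 2 * rank G u v

/-- A BED-admissible flipEdge: there is an imbalanced triad containing the edge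
in which the edge has maximal rank. -/
def BEDAdmissible {n : ℕ} (G : SignedGraph n) (p : Sym2 (Fin n)) : Prop :=
  ∃ u v w : Fin n, p = s(u, v) ∧ u ≠ v ∧ w ≠ u ∧ w ≠ v ∧
    ¬ BalancedTriad G u v w ∧
    rank G v w ≤ rank G u v ∧ rank G u w ≤ rank G u v

/-- `FlipSeq Adm G L H`: the list of edges `L` is a sequence of `Adm`-admissible flips
transforming `G` into `H`. -/
inductive FlipSeq {n : ℕ} (Adm : SignedGraph n → Sym2 (Fin n) → Prop) :
    SignedGraph n → List (Sym2 (Fin n)) → SignedGraph n → Prop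
  | nil (G : SignedGraph n) : FlipSeq Adm G [] G
  | cons {G H : SignedGraph n} {L : List (Sym2 (Fin n))} (p : Sym2 (Fin n)) :
      Adm G p → FlipSeq Adm (flipEdge G p) L H → FlipSeq Adm G (p :: L) H

/-- Circular distance between cluster indices. -/
def circDist {m : ℕ} (i j : Fin m) : ℕ := min (i - j : Fin m).val (j - i : Fin m).val

/-- The circular graph: given a cluster assignment `c`, an edge is a friendship iff
its endpoints lie in clusters at circular distance at most `k`. -/
def circular {n m : ℕ} (c : Fin n → Fin m) (k : ℕ) : SignedGraph n :=
  fun u v => decide (circDist (c u) (c v) ≤ k)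

/-- The jammed state `J_n`: three fixed clusters of size `n/3`, friendships inside
clusters, enmities across. -/
def Jn (n : ℕ) : SignedGraph n :=
  fun u v => decide (u.val / (n / 3) = v.val / (n / 3))

/-- The signed graph obtained from `G` by flipping exactly the edges in `F`. -/
def perturb {n : ℕ} (G : SignedGraph n) (F : Finset (Sym2 (Fin n))) : SignedGraph n :=
  fun u v => if s(u, v) ∈ F then !(G u v) else G u v

/-- The set of (undirected, non-diagonal) edges on which two signed graphs differ. -/
def diffEdges {n : ℕ} (G C : SignedGraph n) : Finset (Sym2 (Fin n)) :=
  univ.filter (fun p => ∃ u v : Fin n, p = s(u, v) ∧ u ≠ v ∧ G u v ≠ C u v)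

/-- `C` is a closest balanced state to `G`: `C` is balanced and minimizes the number of
edges on which the signs differ from `G`. -/
def IsClosestBalanced {n : ℕ} (G C : SignedGraph n) : Prop :=
  Symm C ∧ IsBalanced C ∧
    ∀ C' : SignedGraph n, Symm C' → IsBalanced C' →
      (diffEdges G C).card ≤ (diffEdges G C').card

/-- The two sides of the balanced state `B_n`: clusters `0, 1, 5` versus `2, 3, 4`. -/
def sixPart (i : Fin 6) : Bool := decide (i = 0 ∨ i = 1 ∨ i = 5)

/-- The balanced state `B_n` whose friendship parts are `V₀ ∪ V₁ ∪ V₅` and `V₂ ∪ V₃ ∪ V₄`. -/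
def Bgraph {n : ℕ} (c : Fin n → Fin 6) : SignedGraph n :=
  fun u v => sixPart (c u) == sixPart (c v)

/-- The number of good triads containing the red edge `(u,v)`: imbalanced triads in which
the red edge has strictly greater rank than each of the other two edges. -/
def goodCount {n : ℕ} (G : SignedGraph n) (u v : Fin n) : ℕ :=
  (univ.filter (fun w => w ≠ u ∧ w ≠ v ∧ ¬ BalancedTriad G u v w ∧
    rank G v w < rank G u v ∧ rank G u w < rank G u v)).card

/-- The number of bad triads containing the red edge `(u,v)`: imbalanced triads that
are not good. -/
def badCount {n : ℕ} (G : SignedGraph n) (u v : Fin n) : ℕ :=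
  (univ.filter (fun w => w ≠ u ∧ w ≠ v ∧ ¬ BalancedTriad G u v w ∧
    ¬ (rank G v w < rank G u v ∧ rank G u w < rank G u v))).card
section RFVaux

variable {n : ℕ} {G C : SignedGraph n}

lemma red_symm (hG : Symm G) (hCs : Symm C) {u v : Fin n} (h : G u v ≠ C u v) :
    G v u ≠ C v u := fun hh => h (by rw [hG u v, hCs u v]; exact hh)

lemma black_symm (hG : Symm G) (hCs : Symm C) {u v : Fin n} (h : G u v = C u v) :
    G v u = C v u := by rw [← hG u v, ← hCs u v]; exact h

lemma balanced_swap (hG : Symm G) (u v w : Fin n) :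
    BalancedTriad G u v w ↔ BalancedTriad G v u w := by
  unfold BalancedTriad
  rw [hG u v, Bool.xor_comm (G v w) (G u w)]

lemma rank_symm (hG : Symm G) (u v : Fin n) : rank G u v = rank G v u := by
  unfold rank
  congr 1
  ext x
  simp only [mem_filter, mem_univ, true_and, balanced_swap hG u v x]
  tauto

lemma bal_of_black (hCb : IsBalanced C) {u v w : Fin n} (h1 : u ≠ v) (h2 : v ≠ w) (h3 : u ≠ w)
    (e1 : G u v = C u v) (e2 : G v w = C v w) (e3 : G u w = C u w) :
    BalancedTriad G u v w := by
  have h := hCb u v w h1 h2 h3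
  unfold BalancedTriad at h ⊢
  rw [e1, e2, e3]; exact h

lemma imbal_one_red (hCb : IsBalanced C) {u v w : Fin n} (h1 : u ≠ v) (h2 : v ≠ w) (h3 : u ≠ w)
    (e1 : G u v ≠ C u v) (e2 : G v w = C v w) (e3 : G u w = C u w) :
    ¬ BalancedTriad G u v w := by
  have h := hCb u v w h1 h2 h3
  unfold BalancedTriad at h ⊢
  cases hg1 : G u v <;> cases hc1 : C u v <;> cases hc2 : C v w <;> cases hc3 : C u w <;>
    simp_all

/-- Key lemma: a red edge has strictly greater rank than any black edge sharing its
endpoint `v`, provided at most `n/2` vertices meet red edges. -/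
lemma key_lemma (hG : Symm G) (hCs : Symm C) (hCb : IsBalanced C)
    (h2R : 2 * (univ.filter (fun u : Fin n => ∃ v, v ≠ u ∧ G u v ≠ C u v)).card ≤ n)
    {u v w : Fin n} (huv : u ≠ v) (hvw : v ≠ w)
    (ruv : G u v ≠ C u v) (rvw : G v w = C v w) :
    rank G v w < rank G u v := by
  classical
  set R : Finset (Fin n) := univ.filter (fun u : Fin n => ∃ v, v ≠ u ∧ G u v ≠ C u v) with hR
  have memR : ∀ x : Fin n, x ∈ R ↔ ∃ y, y ≠ x ∧ G x y ≠ C x y := by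
    intro x; simp [hR]
  have huR : u ∈ R := (memR u).mpr ⟨v, huv.symm, ruv⟩
  have hvR : v ∈ R := (memR v).mpr ⟨u, huv, red_symm hG hCs ruv⟩
  have notR_black : ∀ x : Fin n, x ∉ R → ∀ y : Fin n, y ≠ x → G x y = C x y := by
    intro x hx y hyx
    by_contra h
    exact hx ((memR x).mpr ⟨y, hyx, h⟩)
  have hBsub : (univ.filter (fun x => x ≠ v ∧ x ≠ w ∧ ¬ BalancedTriad G v w x)) ⊆ R.erase v := by
    intro x hx
    simp only [mem_filter, mem_univ, true_and] at hx
    obtain ⟨hxv, hxw, hximb⟩ := hx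
    rw [mem_erase]
    refine ⟨hxv, ?_⟩
    by_contra hxR
    have e2 : G w x = C w x := black_symm hG hCs (notR_black x hxR w hxw.symm)
    have e3 : G v x = C v x := black_symm hG hCs (notR_black x hxR v hxv.symm)
    exact hximb (bal_of_black hCb hvw hxw.symm hxv.symm rvw e2 e3)
  have hAsup : (univ \ R) ⊆ univ.filter (fun x => x ≠ u ∧ x ≠ v ∧ ¬ BalancedTriad G u v x) := by
    intro x hx
    rw [mem_sdiff] at hx
    have hxR := hx.2
    have hxu : x ≠ u := fun h => hxR (h ▸ huR)
    have hxv : x ≠ v := fun h => hxR (h ▸ hvR)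
    simp only [mem_filter, mem_univ, true_and]
    refine ⟨hxu, hxv, ?_⟩
    have e2 : G v x = C v x := black_symm hG hCs (notR_black x hxR v hxv.symm)
    have e3 : G u x = C u x := black_symm hG hCs (notR_black x hxR u hxu.symm)
    exact imbal_one_red hCb huv hxv.symm hxu.symm ruv e2 e3
  have hRpos : 0 < R.card := card_pos.mpr ⟨v, hvR⟩
  calc rank G v w
      ≤ (R.erase v).card := card_le_card hBsub
    _ = R.card - 1 := card_erase_of_mem hvR
    _ < R.card := Nat.sub_lt hRpos one_pos
    _ ≤ n - R.card := by omega
    _ = (univ \ R).card := by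
        rw [card_sdiff_of_subset (subset_univ R), card_univ, Fintype.card_fin]
    _ ≤ rank G u v := card_le_card hAsup

end RFVaux

/-- If at most `n/2` vertices are incident to a red edge, then in every
imbalanced triad with exactly one red edge the red edge has strictly greater rank than the
other two edges; consequently every maximal-rank edge of an imbalanced triad is red. -/
theorem red_flipped_vertices (n : ℕ) (G C : SignedGraph n) (hG : Symm G)
    (hC : IsClosestBalanced G C)
    (hred : ((univ.filter (fun u : Fin n => ∃ v, v ≠ u ∧ G u v ≠ C u v)).card : ℝ) ≤ (n : ℝ) / 2) :
    (∀ u v w : Fin n, u ≠ v → w ≠ u → w ≠ v → ¬ BalancedTriad G u v w →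
      G u v ≠ C u v → G v w = C v w → G u w = C u w →
      rank G v w < rank G u v ∧ rank G u w < rank G u v) ∧
    (∀ u v w : Fin n, u ≠ v → w ≠ u → w ≠ v → ¬ BalancedTriad G u v w →
      rank G v w ≤ rank G u v → rank G u w ≤ rank G u v → G u v ≠ C u v) := by
  obtain ⟨hCs, hCb, -⟩ := hC
  have h2R : 2 * (univ.filter (fun u : Fin n => ∃ v, v ≠ u ∧ G u v ≠ C u v)).card ≤ n := by
    rify; linarith
  constructor
  · intro u v w huv hwu hwv _ ruv rvw ruw
    constructor
    · exact key_lemma hG hCs hCb h2R huv hwv.symm ruv rvw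
    · have hk := key_lemma hG hCs hCb h2R huv.symm hwu.symm
        (red_symm hG hCs ruv) ruw
      rwa [rank_symm hG v u] at hk
  · intro u v w huv hwu hwv himb h1 h2 buv
    by_cases bvw : G v w = C v w
    · by_cases buw : G u w = C u w
      · exact himb (bal_of_black hCb huv hwv.symm hwu.symm buv bvw buw)
      · have hk := key_lemma hG hCs hCb h2R hwu huv (red_symm hG hCs buw) buv
        rw [rank_symm hG w u] at hk
        omega
    · have hk := key_lemma hG hCs hCb h2R hwv huv.symm (red_symm hG hCs bvw)
        (black_symm hG hCs buv)
      rw [rank_symm hG w v, rank_symm hG v u] at hk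
      omega
end

section
/- Let G be a signed graph on n vertices, let C be a closest balanced state to G, let k be the number of edges on which G and C differ (the red edges), and suppose that either (1) every vertex is incident to at most n/4 − 1 red edges, or (2) the set of vertices incident to at least one red edge has size at most n/2. Then every maximal sequence of BED-admissible flips starting from G has length exactly k, flips each red edge exactly once and no other edge, and terminates in the balanced state C. -/
open Finset

namespace BEDAux

variable {n : ℕ}

lemma symm_flip {G : SignedGraph n} (hG : Symm G) (p : Sym2 (Fin n)) :
    Symm (flipEdge G p) := by
  intro u v
  simp only [flipEdge]
  rw [Sym2.eq_swap (a := u), hG u v]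

lemma red_symm {G C : SignedGraph n} (hG : Symm G) (hC : Symm C) {a b : Fin n}
    (h : G a b ≠ C a b) : G b a ≠ C b a := by
  rw [← hG, ← hC]; exact h

lemma mem_diffEdges {G C : SignedGraph n} (hG : Symm G) (hC : Symm C) {a b : Fin n} :
    s(a, b) ∈ diffEdges G C ↔ a ≠ b ∧ G a b ≠ C a b := by
  unfold diffEdges
  simp only [mem_filter, mem_univ, true_and]
  constructor
  · rintro ⟨u, v, hp, huv, hne⟩
    rw [Sym2.eq_iff] at hp
    rcases hp with ⟨rfl, rfl⟩ | ⟨rfl, rfl⟩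
    · exact ⟨huv, hne⟩
    · exact ⟨huv.symm, red_symm hG hC hne⟩
  · rintro ⟨hab, h⟩
    exact ⟨a, b, rfl, hab, h⟩

lemma boolaux : ∀ a b c a' b' c' : Bool, (Bool.xor a' (Bool.xor b' c')) = true →
    ((¬ ((Bool.xor a (Bool.xor b c)) = true)) ↔
      (Bool.xor (a != a') (Bool.xor (b != b') (c != c'))) = true) := by decide

lemma imbalanced_iff {G C : SignedGraph n} (hCb : IsBalanced C) {u v w : Fin n}
    (huv : u ≠ v) (hvw : v ≠ w) (huw : u ≠ w) :
    (¬ BalancedTriad G u v w) ↔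
      (Bool.xor (G u v != C u v) (Bool.xor (G v w != C v w) (G u w != C u w))) = true := by
  have hc := hCb u v w huv hvw huw
  unfold BalancedTriad at hc ⊢
  exact boolaux _ _ _ _ _ _ hc

/-- The key structural hypothesis: every red edge lies in an imbalanced triad with two
black edges, and every red edge has strictly larger rank than every black edge. -/
def Good (G C : SignedGraph n) : Prop :=
  (∀ u v : Fin n, u ≠ v → G u v ≠ C u v →
      ∃ w, w ≠ u ∧ w ≠ v ∧ G u w = C u w ∧ G v w = C v w) ∧
  (∀ u v x y : Fin n, u ≠ v → x ≠ y → G u v ≠ C u v → G x y = C x y →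
      rank G x y < rank G u v)

lemma bed_iff_red {G C : SignedGraph n} (hG : Symm G) (hC : Symm C) (hCb : IsBalanced C)
    (hg : Good G C) (p : Sym2 (Fin n)) :
    BEDAdmissible G p ↔ p ∈ diffEdges G C := by
  constructor
  · rintro ⟨u, v, w, rfl, huv, hwu, hwv, himb, h1, h2⟩
    rw [mem_diffEdges hG hC]
    refine ⟨huv, ?_⟩
    by_contra heq
    rw [imbalanced_iff hCb huv (Ne.symm hwv) (Ne.symm hwu)] at himb
    have e1 : (G u v != C u v) = false := by simp [heq]
    rw [e1] at himb
    simp only [Bool.false_xor] at himb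
    rcases hvw : (G v w != C v w) with _ | _
    · rw [hvw] at himb
      simp only [Bool.false_xor] at himb
      have hred : G u w ≠ C u w := bne_iff_ne.mp himb
      have := hg.2 u w u v (Ne.symm hwu) huv hred heq
      omega
    · have hred : G v w ≠ C v w := bne_iff_ne.mp hvw
      have := hg.2 v w u v (Ne.symm hwv) huv hred heq
      omega
  · intro hp
    unfold diffEdges at hp
    simp only [mem_filter, mem_univ, true_and] at hp
    obtain ⟨u, v, rfl, huv, hred⟩ := hp
    obtain ⟨w, hwu, hwv, hbu, hbv⟩ := hg.1 u v huv hred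
    refine ⟨u, v, w, rfl, huv, hwu, hwv, ?_, ?_, ?_⟩
    · rw [imbalanced_iff hCb huv (Ne.symm hwv) (Ne.symm hwu)]
      have e1 : (G u v != C u v) = true := bne_iff_ne.mpr hred
      have e2 : (G v w != C v w) = false := by simp [hbv]
      have e3 : (G u w != C u w) = false := by simp [hbu]
      rw [e1, e2, e3]; rfl
    · exact (hg.2 u v v w huv (Ne.symm hwv) hred hbv).le
    · exact (hg.2 u v u w huv (Ne.symm hwu) hred hbu).le

lemma rank_ge_B {G C : SignedGraph n} (hCb : IsBalanced C) {u v : Fin n}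
    (huv : u ≠ v) (hred : G u v ≠ C u v) :
    (univ.filter (fun w => w ≠ u ∧ w ≠ v ∧ G u w = C u w ∧ G v w = C v w)).card
      ≤ rank G u v := by
  apply card_le_card
  intro w hw
  simp only [mem_filter, mem_univ, true_and] at hw ⊢
  obtain ⟨h1, h2, h3, h4⟩ := hw
  refine ⟨h1, h2, ?_⟩
  rw [imbalanced_iff hCb huv (Ne.symm h2) (Ne.symm h1)]
  have e1 : (G u v != C u v) = true := bne_iff_ne.mpr hred
  have e2 : (G v w != C v w) = false := by simp [h4]
  have e3 : (G u w != C u w) = false := by simp [h3]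
  rw [e1, e2, e3]; rfl

lemma rank_le_A {G C : SignedGraph n} (hCb : IsBalanced C) {x y : Fin n}
    (hxy : x ≠ y) (hblack : G x y = C x y) :
    rank G x y ≤
      (univ.filter (fun w => w ≠ x ∧ w ≠ y ∧ (G x w ≠ C x w ∨ G y w ≠ C y w))).card := by
  apply card_le_card
  intro w hw
  simp only [rank, mem_filter, mem_univ, true_and] at hw ⊢
  obtain ⟨h1, h2, himb⟩ := hw
  refine ⟨h1, h2, ?_⟩
  rw [imbalanced_iff hCb hxy (Ne.symm h2) (Ne.symm h1)] at himb
  have e1 : (G x y != C x y) = false := by simp [hblack]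
  rw [e1] at himb
  simp only [Bool.false_xor] at himb
  by_cases hxw : G x w = C x w
  · right
    have e3 : (G x w != C x w) = false := by simp [hxw]
    rw [e3, Bool.xor_false] at himb
    exact bne_iff_ne.mp himb
  · left; exact hxw

/-- The disjunctive sparsity condition. -/
def Cond (G C : SignedGraph n) : Prop :=
  (∀ u : Fin n,
      ((univ.filter (fun v => v ≠ u ∧ G u v ≠ C u v)).card : ℝ) ≤ (n : ℝ) / 4 - 1) ∨
    ((univ.filter (fun u : Fin n => ∃ v, v ≠ u ∧ G u v ≠ C u v)).card : ℝ) ≤ (n : ℝ) / 2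

lemma good1 {G C : SignedGraph n} (hG : Symm G) (hC : Symm C) (hCb : IsBalanced C)
    (h : ∀ u : Fin n,
      ((univ.filter (fun v => v ≠ u ∧ G u v ≠ C u v)).card : ℝ) ≤ (n : ℝ) / 4 - 1) :
    Good G C := by
  set D : Fin n → ℕ := fun u => (univ.filter (fun v => v ≠ u ∧ G u v ≠ C u v)).card with hD
  have hnat : ∀ u, 4 * D u + 4 ≤ n := by
    intro u
    have h1 := h u
    have h2 : ((4 * D u + 4 : ℕ) : ℝ) ≤ (n : ℝ) := by push_cast; linarith
    exact_mod_cast h2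
  have hblackle : ∀ x y : Fin n, x ≠ y → G x y = C x y → rank G x y ≤ D x + D y := by
    intro x y hxy hb
    refine le_trans (rank_le_A hCb hxy hb) ?_
    refine le_trans (card_le_card (?_ :
      (univ.filter (fun w => w ≠ x ∧ w ≠ y ∧ (G x w ≠ C x w ∨ G y w ≠ C y w))) ⊆
      (univ.filter (fun z => z ≠ x ∧ G x z ≠ C x z)) ∪
      (univ.filter (fun z => z ≠ y ∧ G y z ≠ C y z)))) (card_union_le _ _)
    intro w hw
    simp only [mem_filter, mem_univ, true_and, mem_union] at hw ⊢
    rcases hw with ⟨h1, h2, h3 | h3⟩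
    · exact Or.inl ⟨h1, red_symm hG hC (red_symm hG hC h3)⟩
    · exact Or.inr ⟨h2, h3⟩
  have hBcard : ∀ u v : Fin n, u ≠ v → G u v ≠ C u v →
      n ≤ (univ.filter
        (fun w => w ≠ u ∧ w ≠ v ∧ G u w = C u w ∧ G v w = C v w)).card + D u + D v := by
    intro u v huv hred
    set B := univ.filter (fun w => w ≠ u ∧ w ≠ v ∧ G u w = C u w ∧ G v w = C v w) with hB
    set A := univ.filter (fun w => w ≠ u ∧ w ≠ v ∧ (G u w ≠ C u w ∨ G v w ≠ C v w)) with hA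
    have hcover : (univ : Finset (Fin n)) ⊆ B ∪ A ∪ {u, v} := by
      intro w _
      simp only [mem_union, hB, hA, mem_filter, mem_univ, true_and, mem_insert,
        mem_singleton]
      by_cases h1 : w = u
      · exact Or.inr (Or.inl h1)
      by_cases h2 : w = v
      · exact Or.inr (Or.inr h2)
      by_cases h3 : G u w = C u w
      · by_cases h4 : G v w = C v w
        · exact Or.inl (Or.inl ⟨h1, h2, h3, h4⟩)
        · exact Or.inl (Or.inr ⟨h1, h2, Or.inr h4⟩)
      · exact Or.inl (Or.inr ⟨h1, h2, Or.inl h3⟩)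
    have h0 := card_le_card hcover
    have hu1 := card_union_le (B ∪ A) ({u, v} : Finset (Fin n))
    have hu2 := card_union_le B A
    have h3' : ({u, v} : Finset (Fin n)).card ≤ 2 := by
      refine le_trans (card_insert_le _ _) ?_
      simp
    simp only [card_univ, Fintype.card_fin] at h0
    have hAcard : A.card + 2 ≤ D u + D v := by
      have hsub : A ⊆ ((univ.filter (fun z => z ≠ u ∧ G u z ≠ C u z)).erase v) ∪
          ((univ.filter (fun z => z ≠ v ∧ G v z ≠ C v z)).erase u) := by
        intro w hw
        simp only [hA, mem_filter, mem_univ, true_and, mem_union, mem_erase] at hw ⊢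
        rcases hw with ⟨h1, h2, h3 | h3⟩
        · exact Or.inl ⟨h2, h1, h3⟩
        · exact Or.inr ⟨h1, h2, h3⟩
      have hvmem : v ∈ univ.filter (fun z => z ≠ u ∧ G u z ≠ C u z) := by
        simp only [mem_filter, mem_univ, true_and]
        exact ⟨huv.symm, hred⟩
      have humem : u ∈ univ.filter (fun z => z ≠ v ∧ G v z ≠ C v z) := by
        simp only [mem_filter, mem_univ, true_and]
        exact ⟨huv, red_symm hG hC hred⟩
      have hc1 := (card_le_card hsub).trans (card_union_le _ _)
      rw [card_erase_of_mem hvmem, card_erase_of_mem humem] at hc1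
      have hc2 : 1 ≤ D u := card_pos.mpr ⟨v, hvmem⟩
      have hc3 : 1 ≤ D v := card_pos.mpr ⟨u, humem⟩
      simp only [hD] at hc2 hc3 ⊢
      omega
    omega
  constructor
  · intro u v huv hred
    have h1 := hBcard u v huv hred
    have h2 := hnat u
    have h3 := hnat v
    have hBpos : 0 < (univ.filter
        (fun w => w ≠ u ∧ w ≠ v ∧ G u w = C u w ∧ G v w = C v w)).card := by omega
    obtain ⟨w, hw⟩ := card_pos.mp hBpos
    simp only [mem_filter, mem_univ, true_and] at hw
    exact ⟨w, hw⟩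
  · intro u v x y huv hxy hred hblack
    have h1 := hBcard u v huv hred
    have h1' := rank_ge_B hCb huv hred
    have h2 := hblackle x y hxy hblack
    have h3 := hnat u
    have h4 := hnat v
    have h5 := hnat x
    have h6 := hnat y
    omega

lemma good2 {G C : SignedGraph n} (hG : Symm G) (hC : Symm C) (hCb : IsBalanced C)
    (h : ((univ.filter (fun u : Fin n => ∃ v, v ≠ u ∧ G u v ≠ C u v)).card : ℝ)
        ≤ (n : ℝ) / 2) :
    Good G C := by
  set S := univ.filter (fun u : Fin n => ∃ v, v ≠ u ∧ G u v ≠ C u v) with hS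
  have hs : 2 * S.card ≤ n := by
    have h2 : ((2 * S.card : ℕ) : ℝ) ≤ (n : ℝ) := by push_cast; linarith
    exact_mod_cast h2
  have hmemS : ∀ a b : Fin n, a ≠ b → G a b ≠ C a b → a ∈ S := by
    intro a b hab hred
    simp only [hS, mem_filter, mem_univ, true_and]
    exact ⟨b, hab.symm, hred⟩
  have hredge : ∀ u v : Fin n, u ≠ v → G u v ≠ C u v →
      n - S.card ≤ rank G u v := by
    intro u v huv hred
    have hu : u ∈ S := hmemS u v huv hred
    have hv : v ∈ S := hmemS v u huv.symm (red_symm hG hC hred)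
    refine le_trans ?_ (rank_ge_B hCb huv hred)
    have hsub : Sᶜ ⊆ univ.filter
        (fun w => w ≠ u ∧ w ≠ v ∧ G u w = C u w ∧ G v w = C v w) := by
      intro w hw
      rw [Finset.mem_compl] at hw
      simp only [mem_filter, mem_univ, true_and]
      have hwu : w ≠ u := fun e => hw (e ▸ hu)
      have hwv : w ≠ v := fun e => hw (e ▸ hv)
      refine ⟨hwu, hwv, ?_, ?_⟩
      · by_contra h'
        exact hw (hmemS w u hwu (red_symm hG hC h'))
      · by_contra h'
        exact hw (hmemS w v hwv (red_symm hG hC h'))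
    have := card_le_card hsub
    rwa [Finset.card_compl, Fintype.card_fin] at this
  constructor
  · intro u v huv hred
    have hu : u ∈ S := hmemS u v huv hred
    have hv : v ∈ S := hmemS v u huv.symm (red_symm hG hC hred)
    have hs2 : 2 ≤ S.card := Finset.one_lt_card.mpr ⟨u, hu, v, hv, huv⟩
    have hsub : Sᶜ ⊆ univ.filter
        (fun w => w ≠ u ∧ w ≠ v ∧ G u w = C u w ∧ G v w = C v w) := by
      intro w hw
      rw [Finset.mem_compl] at hw
      simp only [mem_filter, mem_univ, true_and]
      have hwu : w ≠ u := fun e => hw (e ▸ hu)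
      have hwv : w ≠ v := fun e => hw (e ▸ hv)
      refine ⟨hwu, hwv, ?_, ?_⟩
      · by_contra h'
        exact hw (hmemS w u hwu (red_symm hG hC h'))
      · by_contra h'
        exact hw (hmemS w v hwv (red_symm hG hC h'))
    have hcard := card_le_card hsub
    rw [Finset.card_compl, Fintype.card_fin] at hcard
    have hpos : 0 < (univ.filter
        (fun w => w ≠ u ∧ w ≠ v ∧ G u w = C u w ∧ G v w = C v w)).card := by omega
    obtain ⟨w, hw⟩ := card_pos.mp hpos
    simp only [mem_filter, mem_univ, true_and] at hw
    exact ⟨w, hw⟩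
  · intro u v x y huv hxy hred hblack
    have hu : u ∈ S := hmemS u v huv hred
    have hv : v ∈ S := hmemS v u huv.symm (red_symm hG hC hred)
    have hs2 : 2 ≤ S.card := Finset.one_lt_card.mpr ⟨u, hu, v, hv, huv⟩
    have hrr := hredge u v huv hred
    have hrb := rank_le_A hCb hxy hblack
    set T := univ.filter (fun w => w ≠ x ∧ w ≠ y ∧ (G x w ≠ C x w ∨ G y w ≠ C y w))
      with hT
    have hTS : ∀ w, w ∈ T → w ∈ S := by
      intro w hw
      simp only [hT, mem_filter, mem_univ, true_and] at hw
      rcases hw with ⟨h1, h2, h3 | h3⟩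
      · exact hmemS w x h1 (red_symm hG hC h3)
      · exact hmemS w y h2 (red_symm hG hC h3)
    by_cases hxS : x ∈ S
    · have hsub : T ⊆ S.erase x := by
        intro w hw
        rw [Finset.mem_erase]
        have := hTS w hw
        simp only [hT, mem_filter, mem_univ, true_and] at hw
        exact ⟨hw.1, this⟩
      have hc := card_le_card hsub
      rw [card_erase_of_mem hxS] at hc
      omega
    · by_cases hyS : y ∈ S
      · have hsub : T ⊆ S.erase y := by
          intro w hw
          rw [Finset.mem_erase]
          have := hTS w hw
          simp only [hT, mem_filter, mem_univ, true_and] at hw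
          exact ⟨hw.2.1, this⟩
        have hc := card_le_card hsub
        rw [card_erase_of_mem hyS] at hc
        omega
      · have hTempty : T = ∅ := by
          rw [Finset.eq_empty_iff_forall_notMem]
          intro w hw
          simp only [hT, mem_filter, mem_univ, true_and] at hw
          rcases hw with ⟨h1, h2, h3 | h3⟩
          · exact hxS (hmemS x w (Ne.symm h1) h3)
          · exact hyS (hmemS y w (Ne.symm h2) h3)
        rw [hTempty] at hrb
        simp at hrb
        omega

lemma good_of_cond {G C : SignedGraph n} (hG : Symm G) (hC : Symm C)
    (hCb : IsBalanced C) (h : Cond G C) : Good G C :=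
  h.elim (good1 hG hC hCb) (good2 hG hC hCb)

lemma flip_red_mono {G C : SignedGraph n} {u v : Fin n} (hG : Symm G) (hC : Symm C)
    (hred : G u v ≠ C u v) :
    ∀ x y : Fin n, flipEdge G s(u, v) x y ≠ C x y → G x y ≠ C x y := by
  intro x y h
  unfold flipEdge at h
  by_cases hp : s(x, y) = s(u, v)
  · exfalso
    rw [if_pos hp] at h
    rw [Sym2.eq_iff] at hp
    have hxy : G x y ≠ C x y := by
      rcases hp with ⟨rfl, rfl⟩ | ⟨rfl, rfl⟩
      · exact hred
      · exact red_symm hG hC hred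
    apply h
    cases hGxy : G x y <;> cases hCxy : C x y <;> simp_all
  · rwa [if_neg hp] at h

lemma cond_flip {G C : SignedGraph n} (hG : Symm G) (hC : Symm C) {u v : Fin n}
    (hred : G u v ≠ C u v) (h : Cond G C) : Cond (flipEdge G s(u, v)) C := by
  have hm := flip_red_mono hG hC hred
  rcases h with h | h
  · left
    intro x
    refine le_trans ?_ (h x)
    have hsub : univ.filter (fun y => y ≠ x ∧ flipEdge G s(u, v) x y ≠ C x y) ⊆
        univ.filter (fun y => y ≠ x ∧ G x y ≠ C x y) := by
      intro y hy
      simp only [mem_filter, mem_univ, true_and] at hy ⊢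
      exact ⟨hy.1, hm x y hy.2⟩
    exact_mod_cast card_le_card hsub
  · right
    refine le_trans ?_ h
    have hsub : univ.filter (fun a : Fin n => ∃ b, b ≠ a ∧ flipEdge G s(u, v) a b ≠ C a b)
        ⊆ univ.filter (fun a : Fin n => ∃ b, b ≠ a ∧ G a b ≠ C a b) := by
      intro a ha
      simp only [mem_filter, mem_univ, true_and] at ha ⊢
      obtain ⟨b, hb1, hb2⟩ := ha
      exact ⟨b, hb1, hm a b hb2⟩
    exact_mod_cast card_le_card hsub

lemma diff_flip {G C : SignedGraph n} (hG : Symm G) (hC : Symm C) {u v : Fin n}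
    (huv : u ≠ v) (hred : G u v ≠ C u v) :
    diffEdges (flipEdge G s(u, v)) C = (diffEdges G C).erase s(u, v) := by
  have hG' := symm_flip hG (s(u, v))
  ext p
  induction p using Sym2.ind with
  | _ a b =>
    rw [mem_diffEdges hG' hC, Finset.mem_erase, mem_diffEdges hG hC]
    by_cases hp : s(a, b) = s(u, v)
    · have hfl : flipEdge G s(u, v) a b = !(G a b) := by
        simp [flipEdge, hp]
      have hab : G a b ≠ C a b := by
        rw [Sym2.eq_iff] at hp
        rcases hp with ⟨rfl, rfl⟩ | ⟨rfl, rfl⟩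
        · exact hred
        · exact red_symm hG hC hred
      constructor
      · rintro ⟨hne, hcontr⟩
        exfalso
        apply hcontr
        rw [hfl]
        cases hGab : G a b <;> cases hCab : C a b <;> simp_all
      · rintro ⟨hne, -⟩
        exact absurd hp hne
    · have hfl : flipEdge G s(u, v) a b = G a b := by
        simp [flipEdge, hp]
      rw [hfl]
      constructor
      · rintro ⟨h1, h2⟩
        exact ⟨hp, h1, h2⟩
      · rintro ⟨-, h1, h2⟩
        exact ⟨h1, h2⟩

lemma main_aux (C : SignedGraph n) (hCs : Symm C) (hCb : IsBalanced C) :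
    ∀ (L : List (Sym2 (Fin n))) (G H : SignedGraph n), Symm G → Cond G C →
      FlipSeq BEDAdmissible G L H → (∀ p, ¬ BEDAdmissible H p) →
      L.length = (diffEdges G C).card ∧ L.Nodup ∧ L.toFinset = diffEdges G C ∧
        ∀ u v : Fin n, u ≠ v → H u v = C u v := by
  intro L
  induction L with
  | nil =>
    intro G H hG hcond hseq hmax
    cases hseq
    have hgood := good_of_cond hG hCs hCb hcond
    have hempty : diffEdges G C = ∅ := by
      by_contra hne
      obtain ⟨p, hp⟩ := Finset.nonempty_of_ne_empty hne
      exact hmax p ((bed_iff_red hG hCs hCb hgood p).mpr hp)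
    refine ⟨by simp [hempty], List.nodup_nil, by simp [hempty], ?_⟩
    intro u v huv
    by_contra hne
    have : s(u, v) ∈ diffEdges G C := (mem_diffEdges hG hCs).mpr ⟨huv, hne⟩
    simp [hempty] at this
  | cons p L ih =>
    intro G H hG hcond hseq hmax
    cases hseq with
    | cons _ hadm hseq' =>
      have hgood := good_of_cond hG hCs hCb hcond
      have hp : p ∈ diffEdges G C := (bed_iff_red hG hCs hCb hgood p).mp hadm
      have hp' := hp
      unfold diffEdges at hp'
      simp only [mem_filter, mem_univ, true_and] at hp'
      obtain ⟨u, v, rfl, huv, hred⟩ := hp'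
      have hG' := symm_flip hG (s(u, v))
      have hcond' := cond_flip hG hCs hred hcond
      have hdiff : diffEdges (flipEdge G s(u, v)) C = (diffEdges G C).erase s(u, v) :=
        diff_flip hG hCs huv hred
      obtain ⟨hlen, hnodup, hfin, hHC⟩ :=
        ih (flipEdge G s(u, v)) H hG' hcond' hseq' hmax
      have hcardpos : 0 < (diffEdges G C).card := card_pos.mpr ⟨_, hp⟩
      refine ⟨?_, ?_, ?_, hHC⟩
      · rw [List.length_cons, hlen, hdiff, card_erase_of_mem hp]
        omega
      · rw [List.nodup_cons]
        refine ⟨fun hmem => ?_, hnodup⟩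
        have : s(u, v) ∈ (diffEdges G C).erase s(u, v) := by
          rw [← hdiff, ← hfin]
          exact List.mem_toFinset.mpr hmem
        exact (Finset.notMem_erase _ _) this
      · rw [List.toFinset_cons, hfin, hdiff, Finset.insert_erase hp]

end BEDAux

/-- Under either red-sparsity condition, every maximal sequence of
BED-admissible flips from `G` has length `k` (the number of red edges), flips each red
edge exactly once and no other edge, and terminates in the closest balanced state `C`. -/
theorem bed_fast_near_balance (n : ℕ) (G C : SignedGraph n) (hG : Symm G)
    (hC : IsClosestBalanced G C)
    (hcond : (∀ u : Fin n,
        ((univ.filter (fun v => v ≠ u ∧ G u v ≠ C u v)).card : ℝ) ≤ (n : ℝ) / 4 - 1) ∨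
      ((univ.filter (fun u : Fin n => ∃ v, v ≠ u ∧ G u v ≠ C u v)).card : ℝ) ≤ (n : ℝ) / 2) :
    ∀ (L : List (Sym2 (Fin n))) (H : SignedGraph n),
      FlipSeq BEDAdmissible G L H → (∀ p, ¬ BEDAdmissible H p) →
      L.length = (diffEdges G C).card ∧ L.Nodup ∧ L.toFinset = diffEdges G C ∧
      ∀ u v : Fin n, u ≠ v → H u v = C u v := by
  obtain ⟨hCs, hCb, -⟩ := hC
  intro L H hseq hmax
  exact BEDAux.main_aux C hCs hCb L G H hG hcond hseq hmax
end

section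
/- For every n ≥ 72 divisible by 8, the signed graph J'_n is jammed. -/
open Finset

def balB (i j k : Fin 6) : Bool :=
  Bool.xor (decide (circDist i j ≤ 1))
    (Bool.xor (decide (circDist j k ≤ 1)) (decide (circDist i k ≤ 1)))

def Tset (i j : Fin 6) : Finset (Fin 6) := univ.filter (fun k => balB i j k = false)

lemma balancedTriad_circular {n : ℕ} (c : Fin n → Fin 6) (u v w : Fin n) :
    BalancedTriad (circular c 1) u v w ↔ balB (c u) (c v) (c w) = true := Iff.rfl

lemma Tset_card : ∀ i j : Fin 6, (Tset i j).card ≤ 2 := by decide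

lemma fiber_card {n : ℕ} (c : Fin n → Fin 6) (t : Finset (Fin 6)) :
    (univ.filter (fun w => c w ∈ t)).card
      = ∑ k ∈ t, (univ.filter (fun w => c w = k)).card := by
  rw [Finset.card_eq_sum_card_fiberwise (f := c) (s := univ.filter (fun w => c w ∈ t)) (t := t)
    (fun x hx => (mem_filter.mp hx).2)]
  refine Finset.sum_congr rfl fun k hk => ?_
  congr 1
  ext w
  simp only [mem_filter, mem_univ, true_and]
  exact ⟨fun h => h.2, fun h => ⟨h ▸ hk, h⟩⟩

lemma jn_rank_le {n : ℕ} (c : Fin n → Fin 6) (u v : Fin n) :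
    rank (circular c 1) u v
      ≤ ∑ k ∈ Tset (c u) (c v), (univ.filter (fun w => c w = k)).card := by
  rw [← fiber_card]
  apply Finset.card_le_card
  intro w hw
  simp only [rank, mem_filter, mem_univ, true_and] at hw
  obtain ⟨-, -, hbal⟩ := hw
  rw [balancedTriad_circular] at hbal
  simp only [mem_filter, mem_univ, true_and, Tset]
  exact Bool.not_eq_true _ ▸ hbal

/-- For `n ≥ 72` divisible by `8`, the state `J'_n` (six clusters of sizes
`x, y, y, x, y, y` with `x = n/4 - 2`, `y = n/8 + 1` on a cycle, friendships within
circular distance 1) is jammed. -/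
theorem Jn'_jammed (n : ℕ) (hn : 72 ≤ n) (h8 : 8 ∣ n) (c : Fin n → Fin 6)
    (hc0 : (univ.filter (fun u => c u = 0)).card = n / 4 - 2)
    (hc3 : (univ.filter (fun u => c u = 3)).card = n / 4 - 2)
    (hc1 : (univ.filter (fun u => c u = 1)).card = n / 8 + 1)
    (hc2 : (univ.filter (fun u => c u = 2)).card = n / 8 + 1)
    (hc4 : (univ.filter (fun u => c u = 4)).card = n / 8 + 1)
    (hc5 : (univ.filter (fun u => c u = 5)).card = n / 8 + 1) :
    IsJammed (circular c 1) := by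
  obtain ⟨m, hm⟩ := h8
  have hm9 : 9 ≤ m := by omega
  constructor
  · intro hb
    obtain ⟨u, hu⟩ := Finset.card_pos.mp
      (show 0 < (univ.filter (fun u => c u = 0)).card by rw [hc0]; omega)
    obtain ⟨v, hv⟩ := Finset.card_pos.mp
      (show 0 < (univ.filter (fun u => c u = 2)).card by rw [hc2]; omega)
    obtain ⟨w, hw⟩ := Finset.card_pos.mp
      (show 0 < (univ.filter (fun u => c u = 4)).card by rw [hc4]; omega)
    simp only [mem_filter, mem_univ, true_and] at hu hv hw
    have huv : u ≠ v := fun h => by rw [h, hv] at hu; exact absurd hu (by decide)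
    have hvw : v ≠ w := fun h => by rw [h, hw] at hv; exact absurd hv (by decide)
    have huw : u ≠ w := fun h => by rw [h, hw] at hu; exact absurd hu (by decide)
    have hB := hb u v w huv hvw huw
    rw [balancedTriad_circular, hu, hv, hw] at hB
    exact absurd hB (by decide)
  · intro u v _
    have h1 := jn_rank_le c u v
    have hsk : ∀ k ∈ Tset (c u) (c v),
        (univ.filter (fun w => c w = k)).card ≤ 2 * m - 2 := by
      intro k _
      fin_cases k
      · exact le_trans (Nat.le_of_eq hc0) (by omega)
      · exact le_trans (Nat.le_of_eq hc1) (by omega)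
      · exact le_trans (Nat.le_of_eq hc2) (by omega)
      · exact le_trans (Nat.le_of_eq hc3) (by omega)
      · exact le_trans (Nat.le_of_eq hc4) (by omega)
      · exact le_trans (Nat.le_of_eq hc5) (by omega)
    have h2 := Finset.sum_le_card_nsmul _ _ _ hsk
    have h3 := Tset_card (c u) (c v)
    have h4 : (Tset (c u) (c v)).card • (2 * m - 2) ≤ 2 * (2 * m - 2) := by
      simp only [smul_eq_mul]
      exact Nat.mul_le_mul_right _ h3
    omega
end

section
/- Let n ≥ 72 be divisible by 8, let J'_n, B_n and E_0 be as defined, and let F ⊆ E_0. Consider the signed graph G_F that differs from the balanced state B_n exactly on the edges of F (the red edges). Then: (a) no triad of G_F has all three of its edges in F; (b) every edge in F has rank at least n/2 − 4 in G_F; (c) every edge not in E_0 has rank at most n/4 + 2 in G_F; and consequently (d) in every imbalanced triad of G_F, every edge of maximal rank within that triad belongs to E_0. -/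
open Finset

/-! ### Auxiliary lemmas -/

/-- The cluster-level difference relation: clusters `i` and `j` are joined by `E₀` edges. -/
def Dd (i j : Fin 6) : Prop := (decide (circDist i j ≤ 1) : Bool) ≠ (sixPart i == sixPart j)

instance (i j : Fin 6) : Decidable (Dd i j) := instDecidableNot

lemma Dd_symm : ∀ i j : Fin 6, Dd i j ↔ Dd j i := by decide

lemma Dd_notriangle : ∀ i j k : Fin 6, ¬ (Dd i j ∧ Dd j k ∧ Dd i k) := by decide

lemma Dd_ne03 : ∀ i j : Fin 6, Dd i j → i ≠ 0 ∧ i ≠ 3 ∧ j ≠ 0 ∧ j ≠ 3 := by decide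

lemma Dd_cover : ∀ i j : Fin 6, ¬ Dd i j → ∃ a b : Fin 6, a ≠ b ∧
    (a = 1 ∨ a = 2 ∨ a = 4 ∨ a = 5) ∧ (b = 1 ∨ b = 2 ∨ b = 4 ∨ b = 5) ∧
    ∀ k, (Dd i k ∨ Dd j k) → k = a ∨ k = b := by decide

lemma mem_E0 {n : ℕ} (c : Fin n → Fin 6) (u v : Fin n) :
    s(u,v) ∈ diffEdges (circular c 1) (Bgraph c) ↔ u ≠ v ∧ Dd (c u) (c v) := by
  simp only [diffEdges, mem_filter, mem_univ, true_and]
  constructor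
  · rintro ⟨a, b, hab, hne, hd⟩
    rw [Sym2.eq_iff] at hab
    rcases hab with ⟨rfl, rfl⟩ | ⟨rfl, rfl⟩
    · exact ⟨hne, hd⟩
    · exact ⟨hne.symm, (Dd_symm _ _).mp hd⟩
  · rintro ⟨hne, hd⟩; exact ⟨u, v, rfl, hne, hd⟩

lemma bal_perturb {n : ℕ} (c : Fin n → Fin 6) (F : Finset (Sym2 (Fin n))) (u v w : Fin n) :
    ¬ BalancedTriad (perturb (Bgraph c) F) u v w ↔
      (xor (decide (s(u,v) ∈ F)) (xor (decide (s(v,w) ∈ F)) (decide (s(u,w) ∈ F))) = true) := by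
  by_cases h1 : s(u,v) ∈ F <;> by_cases h2 : s(v,w) ∈ F <;> by_cases h3 : s(u,w) ∈ F <;>
    simp [BalancedTriad, perturb, Bgraph, h1, h2, h3] <;>
    cases sixPart (c u) <;> cases sixPart (c v) <;> cases sixPart (c w) <;> simp

/-- For `G_F` differing from the balanced state `B_n` exactly on `F ⊆ E_0`:
(a) no triad has all three edges in `F`; (b) every edge in `F` has rank at least `n/2 - 4`;
(c) every edge outside `E_0` has rank at most `n/4 + 2`; (d) in every imbalanced triad,
every edge of maximal rank belongs to `E_0`. -/
theorem perturbed_Bn_ranks (n : ℕ) (hn : 72 ≤ n) (h8 : 8 ∣ n) (c : Fin n → Fin 6)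
    (hc0 : (univ.filter (fun u => c u = 0)).card = n / 4 - 2)
    (hc3 : (univ.filter (fun u => c u = 3)).card = n / 4 - 2)
    (hc1 : (univ.filter (fun u => c u = 1)).card = n / 8 + 1)
    (hc2 : (univ.filter (fun u => c u = 2)).card = n / 8 + 1)
    (hc4 : (univ.filter (fun u => c u = 4)).card = n / 8 + 1)
    (hc5 : (univ.filter (fun u => c u = 5)).card = n / 8 + 1)
    (F : Finset (Sym2 (Fin n))) (hF : F ⊆ diffEdges (circular c 1) (Bgraph c)) :
    (∀ u v w : Fin n, u ≠ v → v ≠ w → u ≠ w →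
      ¬ (s(u, v) ∈ F ∧ s(v, w) ∈ F ∧ s(u, w) ∈ F)) ∧
    (∀ u v : Fin n, u ≠ v → s(u, v) ∈ F →
      (n : ℝ) / 2 - 4 ≤ (rank (perturb (Bgraph c) F) u v : ℝ)) ∧
    (∀ u v : Fin n, u ≠ v → s(u, v) ∉ diffEdges (circular c 1) (Bgraph c) →
      (rank (perturb (Bgraph c) F) u v : ℝ) ≤ (n : ℝ) / 4 + 2) ∧
    (∀ u v w : Fin n, u ≠ v → w ≠ u → w ≠ v →
      ¬ BalancedTriad (perturb (Bgraph c) F) u v w →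
      rank (perturb (Bgraph c) F) v w ≤ rank (perturb (Bgraph c) F) u v →
      rank (perturb (Bgraph c) F) u w ≤ rank (perturb (Bgraph c) F) u v →
      s(u, v) ∈ diffEdges (circular c 1) (Bgraph c)) := by
  obtain ⟨m, rfl⟩ := h8
  have h9 : 9 ≤ m := by omega
  have memF : ∀ u v : Fin (8*m), s(u,v) ∈ F → Dd (c u) (c v) :=
    fun u v h => ((mem_E0 c u v).mp (hF h)).2
  have hclus : ∀ k : Fin 6, (k = 1 ∨ k = 2 ∨ k = 4 ∨ k = 5) →
      (univ.filter (fun u => c u = k)).card = m + 1 := by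
    have hm8 : 8 * m / 8 = m := by omega
    rintro k (rfl | rfl | rfl | rfl)
    · rw [hc1, hm8]
    · rw [hc2, hm8]
    · rw [hc4, hm8]
    · rw [hc5, hm8]
  -- part (a)
  have parta : ∀ u v w : Fin (8*m), u ≠ v → v ≠ w → u ≠ w →
      ¬ (s(u, v) ∈ F ∧ s(v, w) ∈ F ∧ s(u, w) ∈ F) := by
    rintro u v w _ _ _ ⟨h1, h2, h3⟩
    exact Dd_notriangle (c u) (c v) (c w) ⟨memF _ _ h1, memF _ _ h2, memF _ _ h3⟩
  -- part (b), natural-number version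
  have partb : ∀ u v : Fin (8*m), u ≠ v → s(u, v) ∈ F →
      4 * m - 4 ≤ rank (perturb (Bgraph c) F) u v := by
    intro u v huv hm
    have hdu := memF u v hm
    have h03 := Dd_ne03 _ _ hdu
    have hsub : univ.filter (fun w => c w = 0 ∨ c w = 3) ⊆
        univ.filter (fun w => w ≠ u ∧ w ≠ v ∧
          ¬ BalancedTriad (perturb (Bgraph c) F) u v w) := by
      intro w hw
      simp only [mem_filter, mem_univ, true_and] at hw ⊢
      have h2 : s(v, w) ∉ F := by
        intro h
        have := Dd_ne03 _ _ (memF v w h)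
        rcases hw with hw | hw <;> simp [hw] at this
      have h3 : s(u, w) ∉ F := by
        intro h
        have := Dd_ne03 _ _ (memF u w h)
        rcases hw with hw | hw <;> simp [hw] at this
      refine ⟨?_, ?_, ?_⟩
      · rintro rfl; rcases hw with hw | hw <;> simp [hw] at h03
      · rintro rfl; rcases hw with hw | hw <;> simp [hw] at h03
      · rw [bal_perturb]; simp [hm, h2, h3]
    have hdisj : Disjoint (univ.filter (fun w : Fin (8*m) => c w = 0))
        (univ.filter (fun w => c w = 3)) := by
      rw [Finset.disjoint_left]
      intro w hw hw'
      simp only [mem_filter, mem_univ, true_and] at hw hw'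
      rw [hw] at hw'
      exact absurd hw' (by decide)
    have hcard := card_le_card hsub
    rw [filter_or, card_union_of_disjoint hdisj, hc0, hc3] at hcard
    have h24 : 8 * m / 4 - 2 = 2 * m - 2 := by omega
    rw [h24] at hcard
    calc 4 * m - 4 = (2 * m - 2) + (2 * m - 2) := by omega
    _ ≤ _ := hcard
  -- part (c), natural-number version
  have partc : ∀ u v : Fin (8*m), u ≠ v →
      s(u, v) ∉ diffEdges (circular c 1) (Bgraph c) →
      rank (perturb (Bgraph c) F) u v ≤ 2 * (m + 1) := by
    intro u v huv hne
    have hnd : ¬ Dd (c u) (c v) := fun h => hne ((mem_E0 c u v).mpr ⟨huv, h⟩)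
    obtain ⟨a, b, hab, ha, hb, hcov⟩ := Dd_cover _ _ hnd
    have huvF : s(u, v) ∉ F := fun h => hnd (memF _ _ h)
    have hsub : univ.filter (fun w => w ≠ u ∧ w ≠ v ∧
        ¬ BalancedTriad (perturb (Bgraph c) F) u v w) ⊆
        univ.filter (fun w => c w = a ∨ c w = b) := by
      intro w hw
      simp only [mem_filter, mem_univ, true_and] at hw ⊢
      obtain ⟨-, -, hbal⟩ := hw
      rw [bal_perturb] at hbal
      by_cases h2 : s(v, w) ∈ F
      · exact hcov _ (Or.inr (memF _ _ h2))
      · by_cases h3 : s(u, w) ∈ F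
        · exact hcov _ (Or.inl (memF _ _ h3))
        · simp [huvF, h2, h3] at hbal
    have hcard := card_le_card hsub
    rw [filter_or] at hcard
    calc rank (perturb (Bgraph c) F) u v
        ≤ _ := hcard
      _ ≤ (univ.filter (fun w : Fin (8*m) => c w = a)).card +
          (univ.filter (fun w => c w = b)).card := card_union_le _ _
      _ = (m + 1) + (m + 1) := by rw [hclus a ha, hclus b hb]
      _ = 2 * (m + 1) := by ring
  refine ⟨parta, ?_, ?_, ?_⟩
  · -- part (b), real version
    intro u v huv hm
    have h := partb u v huv hm
    have h' : ((4 * m - 4 : ℕ) : ℝ) ≤ (rank (perturb (Bgraph c) F) u v : ℝ) :=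
      Nat.cast_le.mpr h
    rw [Nat.cast_sub (by omega)] at h'
    push_cast at h' ⊢
    linarith
  · -- part (c), real version
    intro u v huv hne
    have h := partc u v huv hne
    have h' : (rank (perturb (Bgraph c) F) u v : ℝ) ≤ ((2 * (m + 1) : ℕ) : ℝ) :=
      Nat.cast_le.mpr h
    push_cast at h' ⊢
    linarith
  · -- part (d)
    intro u v w huv hwu hwv hbal h1 h2
    by_contra huvE
    have huvF : s(u, v) ∉ F := fun h => huvE (hF h)
    rw [bal_perturb] at hbal
    have hc' := partc u v huv huvE
    by_cases hvw : s(v, w) ∈ F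
    · have := partb v w hwv.symm hvw
      omega
    · have huw : s(u, w) ∈ F := by
        by_contra huw
        simp [huvF, hvw, huw] at hbal
      have := partb u w hwu.symm huw
      omega
end

section
/- Let n ≥ 72 be divisible by 8, let J'_n, B_n and E_0 be as defined, and let F ⊆ E_0. Consider the signed graph G_F that differs from the balanced state B_n exactly on the edges of F (the red edges). Call an imbalanced triad of G_F good if the red edge it contains has strictly greater rank than each of the other two edges of the triad, and bad otherwise. Then every edge in F is contained in at least n/2 − 4 ≥ 32 good triads and in at most 16 bad triads; in particular, every edge in F is contained in at least twice as many good triads as bad triads. -/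
open Finset

section AuxSG

def Acl (i : Fin 6) : Prop := i = 1 ∨ i = 4
def Bcl (i : Fin 6) : Prop := i = 2 ∨ i = 5

instance : DecidablePred Acl := fun _ => inferInstanceAs (Decidable (_ ∨ _))
instance : DecidablePred Bcl := fun _ => inferInstanceAs (Decidable (_ ∨ _))

lemma six_class {i j : Fin 6}
    (h : ¬ (decide (circDist i j ≤ 1) = (sixPart i == sixPart j))) :
    (Acl i ∧ Bcl j) ∨ (Bcl i ∧ Acl j) := by
  revert h; revert j; revert i; decide

lemma notAB {i : Fin 6} : ¬ (Acl i ∧ Bcl i) := by revert i; decide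

lemma mem_F_class {n : ℕ} {c : Fin n → Fin 6} {F : Finset (Sym2 (Fin n))}
    (hF : F ⊆ diffEdges (circular c 1) (Bgraph c)) {x y : Fin n}
    (h : s(x,y) ∈ F) :
    x ≠ y ∧ ((Acl (c x) ∧ Bcl (c y)) ∨ (Bcl (c x) ∧ Acl (c y))) := by
  have h' := hF h
  simp only [diffEdges, mem_filter, mem_univ, true_and] at h'
  obtain ⟨a, b, hab, hne, hdiff⟩ := h'
  simp only [circular, Bgraph] at hdiff
  rw [Sym2.eq_iff] at hab
  rcases hab with ⟨hx, hy⟩ | ⟨hx, hy⟩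
  · subst hx; subst hy
    exact ⟨hne, six_class hdiff⟩
  · subst hx; subst hy
    refine ⟨hne.symm, ?_⟩
    have := six_class hdiff
    tauto

end AuxSG
section AuxSG2
open Finset

lemma bool_helper : ∀ e1 e2 e3 b1 b2 b3 : Bool, Bool.xor b1 (Bool.xor b2 b3) = true →
    ((¬ (Bool.xor (Bool.xor e1 b1) (Bool.xor (Bool.xor e2 b2) (Bool.xor e3 b3)) = true)) ↔
      (e1 = true ↔ (e2 = true ↔ e3 = true))) := by decide

lemma bal_bgraph {n : ℕ} (c : Fin n → Fin 6) (x y w : Fin n) :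
    Bool.xor (Bgraph c x y) (Bool.xor (Bgraph c y w) (Bgraph c x w)) = true := by
  simp only [Bgraph]
  generalize sixPart (c x) = a
  generalize sixPart (c y) = b
  generalize sixPart (c w) = d
  cases a <;> cases b <;> cases d <;> rfl

lemma perturb_apply {n : ℕ} (G : SignedGraph n) (F : Finset (Sym2 (Fin n))) (x y : Fin n) :
    perturb G F x y = Bool.xor (decide (s(x,y) ∈ F)) (G x y) := by
  simp only [perturb]; by_cases h : s(x,y) ∈ F <;> simp [h]

lemma notbal_perturb {n : ℕ} (c : Fin n → Fin 6) (F : Finset (Sym2 (Fin n))) (x y w : Fin n) :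
    ¬ BalancedTriad (perturb (Bgraph c) F) x y w ↔
      (s(x,y) ∈ F ↔ (s(y,w) ∈ F ↔ s(x,w) ∈ F)) := by
  simp only [BalancedTriad, perturb_apply]
  rw [bool_helper _ _ _ _ _ _ (bal_bgraph c x y w)]
  simp only [decide_eq_true_eq]

end AuxSG2
section MainKey
open Finset

lemma main_key {n : ℕ} (hn : 72 ≤ n) (h8 : 8 ∣ n) (c : Fin n → Fin 6)
    (hA : (univ.filter (fun z => Acl (c z))).card = n/4 + 2)
    (hB : (univ.filter (fun z => Bcl (c z))).card = n/4 + 2)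
    (F : Finset (Sym2 (Fin n)))
    (hFc : ∀ x y : Fin n, s(x,y) ∈ F →
      x ≠ y ∧ ((Acl (c x) ∧ Bcl (c y)) ∨ (Bcl (c x) ∧ Acl (c y))))
    (u v : Fin n) (hu : Acl (c u)) (huv : s(u,v) ∈ F) :
    n/2 - 4 ≤ goodCount (perturb (Bgraph c) F) u v ∧
    32 ≤ goodCount (perturb (Bgraph c) F) u v ∧
    badCount (perturb (Bgraph c) F) u v ≤ 8 := by
  obtain ⟨k, hk⟩ := h8
  have hk9 : 9 ≤ k := by omega
  set G := perturb (Bgraph c) F with hG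
  set Aset := univ.filter (fun z => Acl (c z)) with hAset
  set Bset := univ.filter (fun z => Bcl (c z)) with hBset
  set Nf : Fin n → Finset (Fin n) := fun x => univ.filter (fun z => s(x,z) ∈ F) with hNf
  have memN : ∀ x z : Fin n, z ∈ Nf x ↔ s(x,z) ∈ F := by
    intro x z; simp [hNf]
  have hv : Bcl (c v) := by
    rcases (hFc u v huv).2 with ⟨_, h⟩ | ⟨h, _⟩
    · exact h
    · exact absurd ⟨hu, h⟩ notAB
  have hNA : ∀ x : Fin n, Acl (c x) → Nf x ⊆ Bset := by
    intro x hx z hz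
    rw [memN] at hz
    rcases (hFc x z hz).2 with ⟨_, h⟩ | ⟨h, _⟩
    · simp [hBset, h]
    · exact absurd ⟨hx, h⟩ notAB
  have hNB : ∀ x : Fin n, Bcl (c x) → Nf x ⊆ Aset := by
    intro x hx z hz
    rw [memN] at hz
    rcases (hFc x z hz).2 with ⟨h, _⟩ | ⟨_, h⟩
    · exact absurd ⟨h, hx⟩ notAB
    · simp [hAset, h]
  have hN0 : ∀ x : Fin n, ¬ Acl (c x) → ¬ Bcl (c x) → Nf x = ∅ := by
    intro x hx1 hx2
    rw [Finset.eq_empty_iff_forall_notMem]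
    intro z hz
    rw [memN] at hz
    rcases (hFc x z hz).2 with ⟨h, _⟩ | ⟨h, _⟩
    · exact hx1 h
    · exact hx2 h
  have hAcard : Aset.card = 2*k + 2 := by rw [hA]; omega
  have hBcard : Bset.card = 2*k + 2 := by rw [hB]; omega
  have hdu : (Nf u).card ≤ 2*k + 2 := by
    rw [← hBcard]; exact card_le_card (hNA u hu)
  have hdv : (Nf v).card ≤ 2*k + 2 := by
    rw [← hAcard]; exact card_le_card (hNB v hv)
  -- the rank set of the red edge
  set Sr := univ.filter (fun w => w ≠ u ∧ w ≠ v ∧ ¬ BalancedTriad G u v w) with hSr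
  have hrank : rank G u v = Sr.card := rfl
  have hdisj : Disjoint (Nf u) (Nf v) := by
    rw [Finset.disjoint_left]
    intro z hzu hzv
    have h1 := hNA u hu hzu
    have h2 := hNB v hv hzv
    simp only [hAset, hBset, mem_filter, mem_univ, true_and] at h1 h2
    exact notAB ⟨h2, h1⟩
  have huNv : u ∈ Nf v := by rw [memN, Sym2.eq_swap]; exact huv
  have hvNu : v ∈ Nf u := by rw [memN]; exact huv
  -- red imbalance characterization
  have notbal_red : ∀ w : Fin n, ¬ BalancedTriad G u v w ↔ (s(u,w) ∉ F ∧ s(v,w) ∉ F) := by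
    intro w
    rw [hG, notbal_perturb]
    have hnotboth : ¬ (s(u,w) ∈ F ∧ s(v,w) ∈ F) := by
      rintro ⟨h1, h2⟩
      exact absurd ((memN v w).2 h2) (Finset.disjoint_left.1 hdisj ((memN u w).2 h1))
    constructor
    · intro h
      have h' := h.1 huv
      tauto
    · intro h
      tauto
  have hSrset : Sr = univ \ (Nf u ∪ Nf v) := by
    ext w
    simp only [hSr, mem_filter, mem_univ, true_and, mem_sdiff, mem_union, memN]
    constructor
    · rintro ⟨_, _, hb⟩
      rw [notbal_red] at hb
      tauto
    · intro h
      push_neg at h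
      refine ⟨?_, ?_, (notbal_red w).2 ⟨h.1, h.2⟩⟩
      · intro hwu
        apply h.2
        rw [hwu, Sym2.eq_swap]
        exact huv
      · intro hwv
        apply h.1
        rw [hwv]
        exact huv
  have hcardn : (Nf u).card + (Nf v).card ≤ n := by
    have := card_le_card (subset_univ (Nf u ∪ Nf v))
    rwa [card_union_of_disjoint hdisj, card_univ, Fintype.card_fin] at this
  have rank_uv : rank G u v = n - ((Nf u).card + (Nf v).card) := by
    rw [hrank, hSrset, card_sdiff_of_subset (subset_univ _), card_union_of_disjoint hdisj,
      card_univ, Fintype.card_fin]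
  -- subset lemmas for non-red edges
  have rankset_sub : ∀ x y : Fin n, s(x,y) ∉ F →
      (univ.filter (fun w => w ≠ x ∧ w ≠ y ∧ ¬ BalancedTriad G x y w)) ⊆ Nf x ∪ Nf y := by
    intro x y hxy w hw
    simp only [mem_filter, mem_univ, true_and] at hw
    obtain ⟨_, _, hb⟩ := hw
    rw [hG, notbal_perturb] at hb
    rw [mem_union, memN, memN]
    by_cases h2 : s(y,w) ∈ F
    · exact Or.inr h2
    · left
      by_contra h3
      exact hxy (hb.2 (by tauto))
  have rank_nonred : ∀ x y : Fin n, s(x,y) ∉ F →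
      rank G x y ≤ (Nf x).card + (Nf y).card := by
    intro x y hxy
    exact le_trans (card_le_card (rankset_sub x y hxy)) (card_union_le _ _)
  have rankset_sub2 : ∀ (x y : Fin n) (S : Finset (Fin n)), s(x,y) ∉ F →
      Nf x ⊆ S → Nf y ⊆ S →
      (univ.filter (fun w => w ≠ x ∧ w ≠ y ∧ ¬ BalancedTriad G x y w)) ⊆
        (S \ Nf x) ∪ (S \ Nf y) := by
    intro x y S hxy hxS hyS w hw
    simp only [mem_filter, mem_univ, true_and] at hw
    obtain ⟨_, _, hb⟩ := hw
    rw [hG, notbal_perturb] at hb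
    have hone : ¬ (s(y,w) ∈ F ↔ s(x,w) ∈ F) := by tauto
    rw [mem_union, mem_sdiff, mem_sdiff, memN, memN]
    by_cases h2 : s(y,w) ∈ F
    · have h3 : s(x,w) ∉ F := by tauto
      exact Or.inl ⟨hyS ((memN y w).2 h2), h3⟩
    · have h3 : s(x,w) ∈ F := by tauto
      exact Or.inr ⟨hxS ((memN x w).2 h3), h2⟩
  have rank_same : ∀ (x y : Fin n) (S : Finset (Fin n)), s(x,y) ∉ F →
      Nf x ⊆ S → Nf y ⊆ S →
      rank G x y ≤ (S.card - (Nf x).card) + (S.card - (Nf y).card) := by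
    intro x y S hxy hxS hyS
    have h1 := le_trans (card_le_card (rankset_sub2 x y S hxy hxS hyS)) (card_union_le _ _)
    rwa [card_sdiff_of_subset hxS, card_sdiff_of_subset hyS] at h1
  -- no F-edges inside a class
  have noF_AA : ∀ x y : Fin n, Acl (c x) → Acl (c y) → s(x,y) ∉ F := by
    intro x y hx hy h
    rcases (hFc x y h).2 with ⟨_, h2⟩ | ⟨h2, _⟩
    · exact notAB ⟨hy, h2⟩
    · exact notAB ⟨hx, h2⟩
  have noF_BB : ∀ x y : Fin n, Bcl (c x) → Bcl (c y) → s(x,y) ∉ F := by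
    intro x y hx hy h
    rcases (hFc x y h).2 with ⟨h2, _⟩ | ⟨_, h2⟩
    · exact notAB ⟨h2, hx⟩
    · exact notAB ⟨h2, hy⟩
  have noF_A0 : ∀ x y : Fin n, ¬ Acl (c y) → ¬ Bcl (c y) → s(x,y) ∉ F := by
    intro x y hy1 hy2 h
    rcases (hFc x y h).2 with ⟨_, h2⟩ | ⟨_, h2⟩
    · exact hy2 h2
    · exact hy1 h2
  -- Claim B : for w in class B, rank G v w < rank G u v
  have claimB : ∀ w : Fin n, Bcl (c w) → rank G v w < rank G u v := by
    intro w hw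
    have h1 := rank_same v w Aset (noF_BB v w hv hw) (hNB v hv) (hNB w hw)
    have hdw : (Nf w).card ≤ 2*k + 2 := by
      rw [← hAcard]; exact card_le_card (hNB w hw)
    rw [rank_uv]
    omega
  -- Claim A : for w in class A, rank G u w < rank G u v
  have claimA : ∀ w : Fin n, Acl (c w) → rank G u w < rank G u v := by
    intro w hw
    have h1 := rank_same u w Bset (noF_AA u w hu hw) (hNA u hu) (hNA w hw)
    have hdw : (Nf w).card ≤ 2*k + 2 := by
      rw [← hBcard]; exact card_le_card (hNA w hw)
    rw [rank_uv]
    omega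
  -- Claim 0 : for w in no class, both ranks are small
  have claim0 : ∀ w : Fin n, ¬ Acl (c w) → ¬ Bcl (c w) →
      rank G v w < rank G u v ∧ rank G u w < rank G u v := by
    intro w hw1 hw2
    have hdw : (Nf w).card = 0 := by rw [hN0 w hw1 hw2]; rfl
    have h1 := rank_nonred v w (noF_A0 v w hw1 hw2)
    have h2 := rank_nonred u w (noF_A0 u w hw1 hw2)
    rw [rank_uv]
    omega
  -- the good/bad partition
  set Sg := Sr.filter (fun w => rank G v w < rank G u v ∧ rank G u w < rank G u v) with hSg
  set Sb := Sr.filter (fun w => ¬ (rank G v w < rank G u v ∧ rank G u w < rank G u v)) with hSb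
  have hgood : goodCount G u v = Sg.card := by
    unfold goodCount
    rw [hSg, hSr, filter_filter]
    congr 1
    apply Finset.filter_congr
    intro w _
    tauto
  have hbad : badCount G u v = Sb.card := by
    unfold badCount
    rw [hSb, hSr, filter_filter]
    congr 1
    apply Finset.filter_congr
    intro w _
    tauto
  have hsum : Sg.card + Sb.card = Sr.card := by
    rw [hSg, hSb]
    exact Finset.card_filter_add_card_filter_not _
  -- membership facts for bad triads
  have badmemA : ∀ w : Fin n, w ∈ Sb → Acl (c w) → w ∈ Aset \ Nf v := by
    intro w hw hwA
    rw [hSb, mem_filter, hSr, mem_filter] at hw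
    obtain ⟨⟨_, _, _, hb⟩, _⟩ := hw
    rw [notbal_red] at hb
    rw [mem_sdiff, memN]
    exact ⟨by simp [hAset, hwA], hb.2⟩
  have badmemB : ∀ w : Fin n, w ∈ Sb → Bcl (c w) → w ∈ Bset \ Nf u := by
    intro w hw hwB
    rw [hSb, mem_filter, hSr, mem_filter] at hw
    obtain ⟨⟨_, _, _, hb⟩, _⟩ := hw
    rw [notbal_red] at hb
    rw [mem_sdiff, memN]
    exact ⟨by simp [hBset, hwB], hb.1⟩
  have badclass : ∀ w : Fin n, w ∈ Sb → Acl (c w) ∨ Bcl (c w) := by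
    intro w hw
    by_contra h
    push_neg at h
    rw [hSb, mem_filter] at hw
    exact hw.2 (claim0 w h.1 h.2)
  have hbadsub : Sb ⊆ (Bset \ Nf u) ∪ (Aset \ Nf v) := by
    intro w hw
    rcases badclass w hw with h | h
    · exact mem_union_right _ (badmemA w hw h)
    · exact mem_union_left _ (badmemB w hw h)
  have hbadle : Sb.card ≤ ((2*k+2) - (Nf u).card) + ((2*k+2) - (Nf v).card) := by
    have h1 := le_trans (card_le_card hbadsub) (card_union_le _ _)
    rwa [card_sdiff_of_subset (hNA u hu), card_sdiff_of_subset (hNB v hv), hAcard, hBcard] at h1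
  -- good count lower bound
  have hgoodge : 4*k - 4 ≤ goodCount G u v := by
    have h1 : goodCount G u v + Sb.card = rank G u v := by
      rw [hgood, hsum, hrank]
    rw [rank_uv] at h1
    omega
  -- bad ≤ 8 : split the bad set by class
  set X := Sb.filter (fun w => Bcl (c w)) with hX
  set Y := Sb.filter (fun w => Acl (c w)) with hY
  have hbadXY : Sb ⊆ X ∪ Y := by
    intro w hw
    rcases badclass w hw with h | h
    · exact mem_union_right _ (by rw [hY, mem_filter]; exact ⟨hw, h⟩)
    · exact mem_union_left _ (by rw [hX, mem_filter]; exact ⟨hw, h⟩)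
  have hXle : X.card ≤ 4 := by
    rcases Finset.eq_empty_or_nonempty X with h | ⟨w₀, hw₀⟩
    · simp [h]
    · rw [hX, mem_filter] at hw₀
      obtain ⟨hbad₀, hB₀⟩ := hw₀
      have hnotP : ¬ (rank G v w₀ < rank G u v ∧ rank G u w₀ < rank G u v) := by
        rw [hSb, mem_filter] at hbad₀
        exact hbad₀.2
      have hrvw : rank G v w₀ < rank G u v := claimB w₀ hB₀
      have hruw : rank G u v ≤ rank G u w₀ := by
        by_contra hcon
        push_neg at hcon
        exact hnotP ⟨hrvw, hcon⟩
      have huw₀ : s(u,w₀) ∉ F := by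
        have h2 := badmemB w₀ hbad₀ hB₀
        rw [mem_sdiff, memN] at h2
        exact h2.2
      have h1 := rank_nonred u w₀ huw₀
      have hdw : (Nf w₀).card ≤ 2*k + 2 := by
        rw [← hAcard]; exact card_le_card (hNB w₀ hB₀)
      have hdul : 2*k ≤ (Nf u).card + 2 := by
        rw [rank_uv] at hruw
        omega
      have hXsub : X ⊆ Bset \ Nf u := by
        intro w hw
        rw [hX, mem_filter] at hw
        exact badmemB w hw.1 hw.2
      have h2 := card_le_card hXsub
      rw [card_sdiff_of_subset (hNA u hu), hBcard] at h2
      omega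
  have hYle : Y.card ≤ 4 := by
    rcases Finset.eq_empty_or_nonempty Y with h | ⟨w₀, hw₀⟩
    · simp [h]
    · rw [hY, mem_filter] at hw₀
      obtain ⟨hbad₀, hA₀⟩ := hw₀
      have hnotP : ¬ (rank G v w₀ < rank G u v ∧ rank G u w₀ < rank G u v) := by
        rw [hSb, mem_filter] at hbad₀
        exact hbad₀.2
      have hruw : rank G u w₀ < rank G u v := claimA w₀ hA₀
      have hrvw : rank G u v ≤ rank G v w₀ := by
        by_contra hcon
        push_neg at hcon
        exact hnotP ⟨hcon, hruw⟩
      have hvw₀ : s(v,w₀) ∉ F := by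
        have h2 := badmemA w₀ hbad₀ hA₀
        rw [mem_sdiff, memN] at h2
        exact h2.2
      have h1 := rank_nonred v w₀ hvw₀
      have hdw : (Nf w₀).card ≤ 2*k + 2 := by
        rw [← hBcard]; exact card_le_card (hNA w₀ hA₀)
      have hdvl : 2*k ≤ (Nf v).card + 2 := by
        rw [rank_uv] at hrvw
        omega
      have hYsub : Y ⊆ Aset \ Nf v := by
        intro w hw
        rw [hY, mem_filter] at hw
        exact badmemA w hw.1 hw.2
      have h2 := card_le_card hYsub
      rw [card_sdiff_of_subset (hNB v hv), hAcard] at h2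
      omega
  have hbad8 : badCount G u v ≤ 8 := by
    rw [hbad]
    have h1 := le_trans (card_le_card hbadXY) (card_union_le _ _)
    omega
  exact ⟨by omega, by omega, hbad8⟩

end MainKey
section SymmAux
open Finset

lemma G_comm {n : ℕ} (c : Fin n → Fin 6) (F : Finset (Sym2 (Fin n))) (x y : Fin n) :
    perturb (Bgraph c) F x y = perturb (Bgraph c) F y x := by
  rw [perturb_apply, perturb_apply]
  have h1 : s(x,y) = s(y,x) := Sym2.eq_swap
  rw [h1]
  simp only [Bgraph]
  generalize sixPart (c x) = a
  generalize sixPart (c y) = b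
  cases a <;> cases b <;> rfl

lemma bal_comm {n : ℕ} (G : SignedGraph n) (hs : ∀ x y, G x y = G y x) (x y w : Fin n) :
    BalancedTriad G x y w ↔ BalancedTriad G y x w := by
  unfold BalancedTriad
  rw [hs x y, Bool.xor_comm (G y w) (G x w)]

lemma rank_comm {n : ℕ} (G : SignedGraph n) (hs : ∀ x y, G x y = G y x) (x y : Fin n) :
    rank G x y = rank G y x := by
  unfold rank
  apply congrArg
  apply Finset.filter_congr
  intro w _
  have h := bal_comm G hs x y w
  tauto

lemma good_comm {n : ℕ} (G : SignedGraph n) (hs : ∀ x y, G x y = G y x) (x y : Fin n) :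
    goodCount G x y = goodCount G y x := by
  unfold goodCount
  apply congrArg
  apply Finset.filter_congr
  intro w _
  have h1 := bal_comm G hs x y w
  have h2 := rank_comm G hs x y
  rw [h2]
  tauto

lemma bad_comm {n : ℕ} (G : SignedGraph n) (hs : ∀ x y, G x y = G y x) (x y : Fin n) :
    badCount G x y = badCount G y x := by
  unfold badCount
  apply congrArg
  apply Finset.filter_congr
  intro w _
  have h1 := bal_comm G hs x y w
  have h2 := rank_comm G hs x y
  rw [h2]
  tauto

end SymmAux
/-- In `G_F` every red edge (edge of `F`) is contained in at least
`n/2 - 4 ≥ 32` good triads and at most `16` bad triads; in particular at least twice as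
many good triads as bad triads. -/
theorem perturbed_Bn_good_bad (n : ℕ) (hn : 72 ≤ n) (h8 : 8 ∣ n) (c : Fin n → Fin 6)
    (hc0 : (univ.filter (fun u => c u = 0)).card = n / 4 - 2)
    (hc3 : (univ.filter (fun u => c u = 3)).card = n / 4 - 2)
    (hc1 : (univ.filter (fun u => c u = 1)).card = n / 8 + 1)
    (hc2 : (univ.filter (fun u => c u = 2)).card = n / 8 + 1)
    (hc4 : (univ.filter (fun u => c u = 4)).card = n / 8 + 1)
    (hc5 : (univ.filter (fun u => c u = 5)).card = n / 8 + 1)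
    (F : Finset (Sym2 (Fin n))) (hF : F ⊆ diffEdges (circular c 1) (Bgraph c)) :
    ∀ u v : Fin n, u ≠ v → s(u, v) ∈ F →
      ((n : ℝ) / 2 - 4 ≤ (goodCount (perturb (Bgraph c) F) u v : ℝ) ∧
        32 ≤ goodCount (perturb (Bgraph c) F) u v) ∧
      badCount (perturb (Bgraph c) F) u v ≤ 16 ∧
      2 * badCount (perturb (Bgraph c) F) u v ≤ goodCount (perturb (Bgraph c) F) u v := by
  intro u v hne hmem
  have hAcard : (univ.filter (fun z => Acl (c z))).card = n/4 + 2 := by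
    have hsplit : univ.filter (fun z => Acl (c z)) =
        (univ.filter fun z => c z = 1) ∪ (univ.filter fun z => c z = 4) := by
      ext z
      simp only [mem_union, mem_filter, mem_univ, true_and]
      rfl
    have hdisj : Disjoint (univ.filter fun z : Fin n => c z = 1)
        (univ.filter fun z : Fin n => c z = 4) := by
      rw [Finset.disjoint_left]
      intro z h1 h4
      simp only [mem_filter, mem_univ, true_and] at h1 h4
      rw [h1] at h4
      exact absurd h4 (by decide)
    rw [hsplit, card_union_of_disjoint hdisj, hc1, hc4]
    omega
  have hBcard : (univ.filter (fun z => Bcl (c z))).card = n/4 + 2 := by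
    have hsplit : univ.filter (fun z => Bcl (c z)) =
        (univ.filter fun z => c z = 2) ∪ (univ.filter fun z => c z = 5) := by
      ext z
      simp only [mem_union, mem_filter, mem_univ, true_and]
      rfl
    have hdisj : Disjoint (univ.filter fun z : Fin n => c z = 2)
        (univ.filter fun z : Fin n => c z = 5) := by
      rw [Finset.disjoint_left]
      intro z h1 h4
      simp only [mem_filter, mem_univ, true_and] at h1 h4
      rw [h1] at h4
      exact absurd h4 (by decide)
    rw [hsplit, card_union_of_disjoint hdisj, hc2, hc5]
    omega
  have hFc : ∀ x y : Fin n, s(x,y) ∈ F →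
      x ≠ y ∧ ((Acl (c x) ∧ Bcl (c y)) ∨ (Bcl (c x) ∧ Acl (c y))) :=
    fun x y h => mem_F_class hF h
  have hGs : ∀ x y : Fin n, perturb (Bgraph c) F x y = perturb (Bgraph c) F y x :=
    G_comm c F
  have key : n/2 - 4 ≤ goodCount (perturb (Bgraph c) F) u v ∧
      32 ≤ goodCount (perturb (Bgraph c) F) u v ∧
      badCount (perturb (Bgraph c) F) u v ≤ 8 := by
    rcases (hFc u v hmem).2 with ⟨h1, _⟩ | ⟨_, h1⟩
    · exact main_key hn h8 c hAcard hBcard F hFc u v h1 hmem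
    · have hmem' : s(v,u) ∈ F := by rw [Sym2.eq_swap]; exact hmem
      have h := main_key hn h8 c hAcard hBcard F hFc v u h1 hmem'
      rwa [good_comm _ hGs v u, bad_comm _ hGs v u] at h
  obtain ⟨g1, g32, b8⟩ := key
  obtain ⟨k, hk⟩ := h8
  have hk9 : 9 ≤ k := by omega
  refine ⟨⟨?_, g32⟩, by omega, by omega⟩
  have h4k : 4*k ≤ goodCount (perturb (Bgraph c) F) u v + 4 := by omega
  have hcast : (4*(k:ℝ)) ≤ (goodCount (perturb (Bgraph c) F) u v : ℝ) + 4 := by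
    exact_mod_cast h4k
  have hnr : (n:ℝ) = 8 * (k:ℝ) := by exact_mod_cast congrArg (Nat.cast (R := ℝ)) hk
  rw [hnr]
  linarith
end
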